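/- arXiv:2506.00808 — 3 statements merged into one kernel-verified Lean document; each statement's English description precedes it below -/
import Mathlib

section
/- Edge influence on the model output for linear GCN (Theorem 1 / appendix E.3): assume H := Xᵀ Cᵀ C X is invertible, let w*(ε) := (Xᵀ (C + εΞ)ᵀ (C + εΞ) X)⁻¹ Xᵀ (C + εΞ)ᵀ y with w* := w*(0), and define the perturbed model output P(ε) := (C + εΞ) X w*(ε) ∈ ℝ^n. Then ε ↦ P(ε) is differentiable at ε = 0 with derivative Ξ X w* + C X H⁻¹ (Xᵀ Ξᵀ y − Xᵀ Cᵀ Ξ X w* − Xᵀ Ξᵀ C X w*). -/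
open Matrix

attribute [local instance] Matrix.linftyOpNormedRing Matrix.linftyOpNormedAlgebra
  Matrix.linftyOpNormedAddCommGroup Matrix.linftyOpNormedSpace

noncomputable def mvCLM (a b : ℕ) :
    Matrix (Fin a) (Fin b) ℝ →L[ℝ] (Fin b → ℝ) →L[ℝ] (Fin a → ℝ) :=
  LinearMap.toContinuousLinearMap
    { toFun := fun M => LinearMap.toContinuousLinearMap (Matrix.mulVecLin M)
      map_add' := by
        intro M N; ext v i; simp [Matrix.add_mulVec]
      map_smul' := by
        intro c M; ext v i; simp [Matrix.smul_mulVec] }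

@[simp] lemma mvCLM_apply {a b : ℕ} (M : Matrix (Fin a) (Fin b) ℝ) (v : Fin b → ℝ) :
    mvCLM a b M v = M.mulVec v := rfl

lemma HasDerivAt.matMulVec {a b : ℕ} {M : ℝ → Matrix (Fin a) (Fin b) ℝ}
    {v : ℝ → Fin b → ℝ} {M' : Matrix (Fin a) (Fin b) ℝ} {v' : Fin b → ℝ} {x : ℝ}
    (hM : HasDerivAt M M' x) (hv : HasDerivAt v v' x) :
    HasDerivAt (fun ε => (M ε).mulVec (v ε)) (M'.mulVec (v x) + (M x).mulVec v') x := by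
  have hc : HasDerivAt (fun ε => mvCLM a b (M ε)) (mvCLM a b M') x :=
    (mvCLM a b).hasFDerivAt.comp_hasDerivAt x hM
  simpa using hc.clm_apply hv

set_option maxHeartbeats 1000000 in
/-- Edge influence on the model output for linear GCN: if `H := Xᵀ Cᵀ C X` is invertible,
`w*(ε) := (Xᵀ (C + εΞ)ᵀ (C + εΞ) X)⁻¹ Xᵀ (C + εΞ)ᵀ y` with `w* := w*(0)`, and
`P(ε) := (C + εΞ) X w*(ε)`, then `ε ↦ P(ε)` is differentiable at `ε = 0` with derivative
`Ξ X w* + C X H⁻¹ (Xᵀ Ξᵀ y − Xᵀ Cᵀ Ξ X w* − Xᵀ Ξᵀ C X w*)`. -/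
theorem edge_influence_on_output (n d : ℕ) (C : Matrix (Fin n) (Fin n) ℝ)
    (X : Matrix (Fin n) (Fin d) ℝ) (y : Fin n → ℝ) (Ξ : Matrix (Fin n) (Fin n) ℝ)
    (hH : Invertible (Xᵀ * Cᵀ * C * X))
    (wstar : Fin d → ℝ)
    (hw : wstar = (Xᵀ * Cᵀ * C * X)⁻¹.mulVec ((Xᵀ * Cᵀ).mulVec y)) :
    HasDerivAt
      (fun ε : ℝ =>
        ((C + ε • Ξ) * X).mulVec
          ((Xᵀ * (C + ε • Ξ)ᵀ * (C + ε • Ξ) * X)⁻¹.mulVec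
            ((Xᵀ * (C + ε • Ξ)ᵀ).mulVec y)))
      ((Ξ * X).mulVec wstar +
        (C * X).mulVec
          ((Xᵀ * Cᵀ * C * X)⁻¹.mulVec
            ((Xᵀ * Ξᵀ).mulVec y - (Xᵀ * Cᵀ * Ξ * X).mulVec wstar
              - (Xᵀ * Ξᵀ * C * X).mulVec wstar))) 0 := by
  classical
  haveI : CompleteSpace (Matrix (Fin d) (Fin d) ℝ) := FiniteDimensional.complete ℝ _
  set H0 : Matrix (Fin d) (Fin d) ℝ := Xᵀ * Cᵀ * C * X with hH0def
  set H1 : Matrix (Fin d) (Fin d) ℝ := Xᵀ * Ξᵀ * C * X + Xᵀ * Cᵀ * Ξ * X with hH1def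
  set H2 : Matrix (Fin d) (Fin d) ℝ := Xᵀ * Ξᵀ * Ξ * X with hH2def
  -- the matrix-valued curve H(ε)
  have hHfun : (fun ε : ℝ => Xᵀ * (C + ε • Ξ)ᵀ * (C + ε • Ξ) * X)
      = fun ε : ℝ => H0 + ε • H1 + (ε * ε) • H2 := by
    funext ε
    simp only [hH0def, hH1def, hH2def, Matrix.transpose_add, Matrix.transpose_smul,
      Matrix.add_mul, Matrix.mul_add, Matrix.smul_mul, Matrix.mul_smul, smul_smul, smul_add]
    abel
  have hHderiv : HasDerivAt (fun ε : ℝ => Xᵀ * (C + ε • Ξ)ᵀ * (C + ε • Ξ) * X) H1 0 := by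
    rw [hHfun]
    have h1 : HasDerivAt (fun ε : ℝ => ε • H1) ((1 : ℝ) • H1) 0 :=
      (hasDerivAt_id (0 : ℝ)).smul_const H1
    have h2 : HasDerivAt (fun ε : ℝ => (ε * ε) • H2)
        ((1 * 0 + 0 * 1 : ℝ) • H2) 0 :=
      ((hasDerivAt_id (0 : ℝ)).mul (hasDerivAt_id (0 : ℝ))).smul_const H2
    convert ((hasDerivAt_const (0 : ℝ) H0).add h1).add h2 using 1 <;> first | rfl | simp
  -- the inverse curve
  letI := hH
  set u : (Matrix (Fin d) (Fin d) ℝ)ˣ := unitOfInvertible H0 with hu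
  have hinv0 : ((u⁻¹ : (Matrix (Fin d) (Fin d) ℝ)ˣ) : Matrix (Fin d) (Fin d) ℝ) = H0⁻¹ := by
    rw [← Matrix.invOf_eq_nonsing_inv]; rfl
  have hinvderiv : HasDerivAt (fun ε : ℝ => (Xᵀ * (C + ε • Ξ)ᵀ * (C + ε • Ξ) * X)⁻¹)
      (-(H0⁻¹ * H1 * H0⁻¹)) 0 := by
    have hfd := hasFDerivAt_ringInverse (𝕜 := ℝ) u
    have h0 : Xᵀ * (C + (0:ℝ) • Ξ)ᵀ * (C + (0:ℝ) • Ξ) * X = H0 := by simp [hH0def]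
    have hfd' : HasFDerivAt Ring.inverse
        (-((ContinuousLinearMap.mulLeftRight ℝ (Matrix (Fin d) (Fin d) ℝ)) ↑u⁻¹) ↑u⁻¹)
        (Xᵀ * (C + (0:ℝ) • Ξ)ᵀ * (C + (0:ℝ) • Ξ) * X) := by
      rw [h0]; exact hfd
    have hcomp := hfd'.comp_hasDerivAt (f := fun ε : ℝ => Xᵀ * (C + ε • Ξ)ᵀ * (C + ε • Ξ) * X)
      0 hHderiv
    simp only [Function.comp_def] at hcomp
    have heq : (fun ε : ℝ => Ring.inverse (Xᵀ * (C + ε • Ξ)ᵀ * (C + ε • Ξ) * X))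
        = fun ε : ℝ => (Xᵀ * (C + ε • Ξ)ᵀ * (C + ε • Ξ) * X)⁻¹ := by
      funext ε; rw [Matrix.nonsing_inv_eq_ringInverse]
    rw [heq] at hcomp
    simp [ContinuousLinearMap.mulLeftRight_apply, hinv0] at hcomp ⊢
    convert hcomp using 1 <;> rfl
  -- the vector b(ε)
  have hbderiv : HasDerivAt (fun ε : ℝ => (Xᵀ * (C + ε • Ξ)ᵀ).mulVec y)
      ((Xᵀ * Ξᵀ).mulVec y) 0 := by
    have hfun : (fun ε : ℝ => (Xᵀ * (C + ε • Ξ)ᵀ).mulVec y)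
        = fun ε : ℝ => (Xᵀ * Cᵀ).mulVec y + ε • (Xᵀ * Ξᵀ).mulVec y := by
      funext ε
      simp [Matrix.transpose_add, Matrix.transpose_smul, Matrix.mul_add, Matrix.add_mulVec,
        Matrix.mul_smul, Matrix.smul_mulVec]
    rw [hfun]
    convert (hasDerivAt_const (0:ℝ) ((Xᵀ * Cᵀ).mulVec y)).add
      ((hasDerivAt_id (0:ℝ)).smul_const ((Xᵀ * Ξᵀ).mulVec y)) using 1 <;> first | rfl | simp
  -- the curve M(ε) = (C + εΞ) X
  have hMderiv : HasDerivAt (fun ε : ℝ => (C + ε • Ξ) * X) (Ξ * X) 0 := by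
    have hfun : (fun ε : ℝ => (C + ε • Ξ) * X) = fun ε : ℝ => C * X + ε • (Ξ * X) := by
      funext ε; simp [Matrix.add_mul, Matrix.smul_mul]
    rw [hfun]
    convert (hasDerivAt_const (0:ℝ) (C * X)).add
      ((hasDerivAt_id (0:ℝ)).smul_const (Ξ * X)) using 1 <;> first | rfl | simp
  -- combine
  have hq := hinvderiv.matMulVec hbderiv
  have hP := hMderiv.matMulVec hq
  have e0 : Xᵀ * (C + (0:ℝ) • Ξ)ᵀ * (C + (0:ℝ) • Ξ) * X = H0 := by simp [hH0def]
  have eb0 : (Xᵀ * (C + (0:ℝ) • Ξ)ᵀ).mulVec y = (Xᵀ * Cᵀ).mulVec y := by simp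
  have eM0 : (C + (0:ℝ) • Ξ) * X = C * X := by simp
  rw [e0, eb0, eM0] at hP
  have hws : H0⁻¹.mulVec ((Xᵀ * Cᵀ).mulVec y) = wstar := hw.symm
  rw [hws] at hP
  convert hP using 1
  rw [hH1def, hw]
  simp only [Matrix.neg_mulVec, Matrix.mulVec_neg, Matrix.add_mulVec, Matrix.mulVec_sub,
    Matrix.mulVec_add, Matrix.mulVec_smul, Matrix.sub_mulVec, ← Matrix.mulVec_mulVec]
  abel
end

section
/- Single-edge influence on the model output for linear GCN (Corollary appendix E.4, matrix form): assume H := Xᵀ Cᵀ C X is invertible, let Ξ := e_i e_jᵀ + e_j e_iᵀ be the perturbation matrix of the undirected edge (v_i, v_j), and define w*(ε) := (Xᵀ (C + εΞ)ᵀ (C + εΞ) X)⁻¹ Xᵀ (C + εΞ)ᵀ y with w* := w*(0), and P(ε) := (C + εΞ) X w*(ε). Then the derivative of P at ε = 0 equals (x_jᵀ w*) e_i + (x_iᵀ w*) e_j + C X H⁻¹ q, where q := (y_j − z_jᵀ w*) x_i + (y_i − z_iᵀ w*) x_j − ((x_jᵀ w*) z_i + (x_iᵀ w*) z_j) and z_l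 denotes the l-th row of Z := C X. -/
open Matrix

attribute [local instance] Matrix.linftyOpNormedAddCommGroup Matrix.linftyOpNormedSpace Matrix.linftyOpNormedRing Matrix.linftyOpNormedAlgebra

section helpers
variable {m p : ℕ}

/-- Matrix entry evaluation as a linear map. -/
def entryLM (k : Fin m) (l : Fin p) : Matrix (Fin m) (Fin p) ℝ →ₗ[ℝ] ℝ where
  toFun A := A k l
  map_add' _ _ := rfl
  map_smul' _ _ := rfl

theorem HasDerivAt.matrix_entry {A : ℝ → Matrix (Fin m) (Fin p) ℝ}
    {A' : Matrix (Fin m) (Fin p) ℝ} {t : ℝ} (h : HasDerivAt A A' t) (k : Fin m) (l : Fin p) :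
    HasDerivAt (fun ε => A ε k l) (A' k l) t := by
  have := ((entryLM k l).toContinuousLinearMap.hasFDerivAt (x := A t)).comp_hasDerivAt t h
  exact this

theorem HasDerivAt.matrix_mulVec {A : ℝ → Matrix (Fin m) (Fin p) ℝ}
    {A' : Matrix (Fin m) (Fin p) ℝ} {v : ℝ → Fin p → ℝ} {v' : Fin p → ℝ} {t : ℝ}
    (hA : HasDerivAt A A' t) (hv : HasDerivAt v v' t) :
    HasDerivAt (fun ε => (A ε).mulVec (v ε)) (A'.mulVec (v t) + (A t).mulVec v') t := by
  rw [hasDerivAt_pi]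
  intro k
  have : HasDerivAt (fun ε => ∑ l, A ε k l * v ε l)
      (∑ l, (A' k l * v t l + A t k l * v' l)) t := by
    refine HasDerivAt.fun_sum fun l _ => ?_
    exact (hA.matrix_entry k l).mul (hasDerivAt_pi.1 hv l)
  simpa [mulVec, dotProduct, Finset.sum_add_distrib] using this

end helpers

/-- Single-edge influence on the model output for linear GCN (matrix form): with
`H := Xᵀ Cᵀ C X` invertible, `Ξ := e_i e_jᵀ + e_j e_iᵀ`,
`w*(ε) := (Xᵀ (C + εΞ)ᵀ (C + εΞ) X)⁻¹ Xᵀ (C + εΞ)ᵀ y`, `w* := w*(0)`, and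
`P(ε) := (C + εΞ) X w*(ε)`, the derivative of `P` at `ε = 0` equals
`(x_jᵀ w*) e_i + (x_iᵀ w*) e_j + C X H⁻¹ q`, where
`q := (y_j − z_jᵀ w*) x_i + (y_i − z_iᵀ w*) x_j − ((x_jᵀ w*) z_i + (x_iᵀ w*) z_j)`
and `z_l` is the `l`-th row of `Z := C X`. -/
theorem single_edge_influence_on_output (n d : ℕ) (C : Matrix (Fin n) (Fin n) ℝ)
    (X : Matrix (Fin n) (Fin d) ℝ) (y : Fin n → ℝ) (i j : Fin n)
    (Ξ : Matrix (Fin n) (Fin n) ℝ)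
    (hΞ : Ξ = vecMulVec (Pi.single i (1 : ℝ)) (Pi.single j (1 : ℝ))
            + vecMulVec (Pi.single j (1 : ℝ)) (Pi.single i (1 : ℝ)))
    (hH : Invertible (Xᵀ * Cᵀ * C * X))
    (wstar : Fin d → ℝ)
    (hw : wstar = (Xᵀ * Cᵀ * C * X)⁻¹.mulVec ((Xᵀ * Cᵀ).mulVec y)) :
    HasDerivAt
      (fun ε : ℝ =>
        ((C + ε • Ξ) * X).mulVec
          ((Xᵀ * (C + ε • Ξ)ᵀ * (C + ε • Ξ) * X)⁻¹.mulVec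
            ((Xᵀ * (C + ε • Ξ)ᵀ).mulVec y)))
      ((X j ⬝ᵥ wstar) • (Pi.single i 1 : Fin n → ℝ)
        + (X i ⬝ᵥ wstar) • (Pi.single j 1 : Fin n → ℝ)
        + (C * X).mulVec
            ((Xᵀ * Cᵀ * C * X)⁻¹.mulVec
              ((y j - (C * X) j ⬝ᵥ wstar) • X i + (y i - (C * X) i ⬝ᵥ wstar) • X j
                - ((X j ⬝ᵥ wstar) • (C * X) i + (X i ⬝ᵥ wstar) • (C * X) j)))) 0 := by
  classical
  set H : Matrix (Fin d) (Fin d) ℝ := Xᵀ * Cᵀ * C * X with hHdef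
  set B : Matrix (Fin d) (Fin d) ℝ := Xᵀ * Ξᵀ * C * X + Xᵀ * Cᵀ * Ξ * X with hBdef
  set D : Matrix (Fin d) (Fin d) ℝ := Xᵀ * Ξᵀ * Ξ * X with hDdef
  -- derivative of M ε
  have hMeq : ∀ ε : ℝ, Xᵀ * (C + ε • Ξ)ᵀ * (C + ε • Ξ) * X = H + ε • B + (ε * ε) • D := by
    intro ε
    simp only [hHdef, hBdef, hDdef, transpose_add, transpose_smul, Matrix.add_mul,
      Matrix.mul_add, Matrix.smul_mul, Matrix.mul_smul, smul_smul, smul_add]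
    abel
  have hM : HasDerivAt (fun ε : ℝ => Xᵀ * (C + ε • Ξ)ᵀ * (C + ε • Ξ) * X) B 0 := by
    have h1 : HasDerivAt (fun ε : ℝ => H + ε • B + (ε * ε) • D)
        (0 + (1 : ℝ) • B + ((1 * 0 + 0 * 1 : ℝ) • D)) 0 :=
      ((hasDerivAt_const 0 H).add ((hasDerivAt_id 0).smul_const B)).add
        (((hasDerivAt_id 0).mul (hasDerivAt_id 0)).smul_const D)
    simp only [one_smul, mul_zero, zero_mul, add_zero, zero_add, zero_smul] at h1
    convert h1 using 1
    funext ε; exact hMeq ε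
  -- derivative of the inverse
  have hu : IsUnit (H : Matrix (Fin d) (Fin d) ℝ) := isUnit_of_invertible H
  have hM0 : (Xᵀ * (C + (0:ℝ) • Ξ)ᵀ * (C + (0:ℝ) • Ξ) * X) = H := by
    rw [hMeq]; simp
  have hinv : HasDerivAt (fun ε : ℝ => Ring.inverse (Xᵀ * (C + ε • Ξ)ᵀ * (C + ε • Ξ) * X))
      (-(H⁻¹ * B * H⁻¹)) 0 := by
    have hui : ((↑hu.unit⁻¹ : Matrix (Fin d) (Fin d) ℝ)) = H⁻¹ := by
      conv_rhs => rw [← hu.unit_spec]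
      rw [Matrix.nonsing_inv_eq_ringInverse, Ring.inverse_unit]
    have hfd : HasFDerivAt (Ring.inverse : Matrix (Fin d) (Fin d) ℝ → _)
        (-ContinuousLinearMap.mulLeftRight ℝ _ H⁻¹ H⁻¹) H := by
      have := hasFDerivAt_ringInverse (𝕜 := ℝ) hu.unit
      rw [hui, hu.unit_spec] at this; exact this
    have hfd' : HasFDerivAt (Ring.inverse : Matrix (Fin d) (Fin d) ℝ → _)
        (-ContinuousLinearMap.mulLeftRight ℝ _ H⁻¹ H⁻¹)
        ((fun ε : ℝ => Xᵀ * (C + ε • Ξ)ᵀ * (C + ε • Ξ) * X) 0) := by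
      simpa [hM0] using hfd
    have := hfd'.comp_hasDerivAt 0 hM
    exact this
  -- derivative of b ε
  have hb : HasDerivAt (fun ε : ℝ => (Xᵀ * (C + ε • Ξ)ᵀ).mulVec y)
      ((Xᵀ * Ξᵀ).mulVec y) 0 := by
    have h1 : HasDerivAt (fun ε : ℝ => (Xᵀ * Cᵀ).mulVec y + ε • ((Xᵀ * Ξᵀ).mulVec y))
        (0 + (1:ℝ) • ((Xᵀ * Ξᵀ).mulVec y)) 0 :=
      (hasDerivAt_const 0 _).add ((hasDerivAt_id 0).smul_const _)
    simp only [one_smul, zero_add] at h1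
    convert h1 using 1
    funext ε
    simp [transpose_add, transpose_smul, Matrix.mul_add, Matrix.mul_smul, Matrix.add_mulVec,
      Matrix.smul_mulVec]
  -- assemble
  have hg := hinv.matrix_mulVec hb
  have hA : HasDerivAt (fun ε : ℝ => (C + ε • Ξ) * X) (Ξ * X) 0 := by
    have h1 : HasDerivAt (fun ε : ℝ => C * X + ε • (Ξ * X)) (0 + (1:ℝ) • (Ξ * X)) 0 :=
      (hasDerivAt_const 0 _).add ((hasDerivAt_id 0).smul_const _)
    simp only [one_smul, zero_add] at h1
    convert h1 using 1
    funext ε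
    simp [Matrix.add_mul, Matrix.smul_mul]
  have hP := hA.matrix_mulVec hg
  have hre : (fun ε : ℝ => ((C + ε • Ξ) * X).mulVec
      ((Ring.inverse (Xᵀ * (C + ε • Ξ)ᵀ * (C + ε • Ξ) * X)).mulVec
        ((Xᵀ * (C + ε • Ξ)ᵀ).mulVec y))) =
      (fun ε : ℝ => ((C + ε • Ξ) * X).mulVec
        ((Xᵀ * (C + ε • Ξ)ᵀ * (C + ε • Ξ) * X)⁻¹.mulVec
          ((Xᵀ * (C + ε • Ξ)ᵀ).mulVec y))) := by
    funext ε; rw [Matrix.nonsing_inv_eq_ringInverse]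
  rw [hre] at hP
  simp only [hM0, zero_smul, add_zero, ← Matrix.nonsing_inv_eq_ringInverse] at hP
  -- Ξ facts
  have hΞt : Ξᵀ = Ξ := by
    rw [hΞ, transpose_add]
    rw [show (vecMulVec (Pi.single i (1:ℝ)) (Pi.single j 1))ᵀ
        = vecMulVec (Pi.single j (1:ℝ)) (Pi.single i 1) from by
      ext a b; simp [vecMulVec_apply, transpose_apply, mul_comm]]
    rw [show (vecMulVec (Pi.single j (1:ℝ)) (Pi.single i 1))ᵀ
        = vecMulVec (Pi.single i (1:ℝ)) (Pi.single j 1) from by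
      ext a b; simp [vecMulVec_apply, transpose_apply, mul_comm]]
    exact add_comm _ _
  have hsingle : ∀ v : Fin n → ℝ, ∀ a b : Fin n,
      (vecMulVec (Pi.single a (1:ℝ)) (Pi.single b 1)).mulVec v
        = v b • (Pi.single a 1 : Fin n → ℝ) := by
    intro v a b
    funext k
    simp [mulVec, vecMulVec_apply, dotProduct, Pi.single_apply, ite_mul, mul_ite,
      mul_comm]
  have hΞv : ∀ v : Fin n → ℝ, Ξ.mulVec v
      = v j • (Pi.single i 1 : Fin n → ℝ) + v i • (Pi.single j 1 : Fin n → ℝ) := by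
    intro v
    rw [hΞ, Matrix.add_mulVec, hsingle, hsingle]
  have hXt : ∀ (M : Matrix (Fin n) (Fin d) ℝ) (k : Fin n),
      Mᵀ.mulVec (Pi.single k 1) = M k := by
    intro M k; funext a; simp [Matrix.mulVec_single]
  -- piece computations
  have e1 : (Ξ * X).mulVec wstar
      = (X j ⬝ᵥ wstar) • (Pi.single i 1 : Fin n → ℝ)
        + (X i ⬝ᵥ wstar) • (Pi.single j 1 : Fin n → ℝ) := by
    rw [← Matrix.mulVec_mulVec, hΞv]
    rfl
  have e2 : (Xᵀ * Ξᵀ).mulVec y = y j • X i + y i • X j := by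
    rw [hΞt, ← Matrix.mulVec_mulVec, hΞv, Matrix.mulVec_add, Matrix.mulVec_smul,
      Matrix.mulVec_smul, hXt, hXt]
  have e3 : B.mulVec wstar
      = ((C * X) j ⬝ᵥ wstar) • X i + ((C * X) i ⬝ᵥ wstar) • X j
        + ((X j ⬝ᵥ wstar) • (C * X) i + (X i ⬝ᵥ wstar) • (C * X) j) := by
    rw [hBdef, Matrix.add_mulVec]
    congr 1
    · have : (Xᵀ * Ξᵀ * C * X).mulVec wstar
          = Xᵀ.mulVec (Ξ.mulVec ((C * X).mulVec wstar)) := by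
        simp only [hΞt, ← Matrix.mulVec_mulVec]
      rw [this, hΞv, Matrix.mulVec_add, Matrix.mulVec_smul, Matrix.mulVec_smul, hXt, hXt]
      rfl
    · have : (Xᵀ * Cᵀ * Ξ * X).mulVec wstar
          = (C * X)ᵀ.mulVec (Ξ.mulVec (X.mulVec wstar)) := by
        simp only [Matrix.transpose_mul, ← Matrix.mulVec_mulVec]
      rw [this, hΞv, Matrix.mulVec_add, Matrix.mulVec_smul, Matrix.mulVec_smul, hXt, hXt]
      rfl
  -- final identity
  have hrw : (-(H⁻¹ * B * H⁻¹)).mulVec ((Xᵀ * Cᵀ).mulVec y)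
      = -(H⁻¹.mulVec (B.mulVec wstar)) := by
    rw [hw]
    simp only [Matrix.neg_mulVec, ← Matrix.mulVec_mulVec]
  convert hP using 1
  rw [hrw, ← hHdef, ← hw, e1, e2, e3]
  have hc : ∀ u v : Fin d → ℝ, -(H⁻¹ *ᵥ u) + H⁻¹ *ᵥ v = H⁻¹ *ᵥ (v - u) := by
    intro u v
    rw [Matrix.mulVec_sub]
    abel
  rw [hc]
  have hq : (y j • X i + y i • X j)
      - (((C * X) j ⬝ᵥ wstar) • X i + ((C * X) i ⬝ᵥ wstar) • X j
        + ((X j ⬝ᵥ wstar) • (C * X) i + (X i ⬝ᵥ wstar) • (C * X) j))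
      = (y j - (C * X) j ⬝ᵥ wstar) • X i + (y i - (C * X) i ⬝ᵥ wstar) • X j
        - ((X j ⬝ᵥ wstar) • (C * X) i + (X i ⬝ᵥ wstar) • (C * X) j) := by
    module
  rw [hq]
end

section
/- Single-edge influence on a single node's output for linear GCN (Corollary 1 / appendix E.5): assume H := Xᵀ Cᵀ C X is invertible and symmetric-weighted inner products are defined by ⟨a, b⟩_{H⁻¹} := aᵀ H⁻¹ b. Let Ξ := e_i e_jᵀ + e_j e_iᵀ, w*(ε) := (Xᵀ (C + εΞ)ᵀ (C + εΞ) X)⁻¹ Xᵀ (C + εΞ)ᵀ y with w* := w*(0), and P(ε) := (C + εΞ) X w*(ε). Then for every node index k, the k-th coordinate of the derivative of P at ε = 0 equals 1{k = i}·(x_jᵀ w*) + 1{k = j}·(x_iᵀ w*) − ⟨(x_jᵀ w*) z_i + (x_iᵀ w*) z_j, z_k⟩_{H⁻¹} + ⟨(y_j − z_jᵀ w*) x_i + (y_i − z_iᵀ w*) x_j, z_k⟩_{H⁻¹}, where z_l denotes the l-th row of Z := C X and 1{·} is the indicator function. -/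
open Matrix

private lemma det_diffAt {d : ℕ} {M : ℝ → Matrix (Fin d) (Fin d) ℝ}
    (h : ∀ a b, DifferentiableAt ℝ (fun ε => M ε a b) 0) :
    DifferentiableAt ℝ (fun ε => (M ε).det) 0 := by
  simp only [Matrix.det_apply']
  exact DifferentiableAt.fun_sum fun σ _ =>
    (differentiableAt_const _).fun_mul (DifferentiableAt.fun_finsetProd fun i _ => h _ _)

private lemma inv_entry_diffAt {d : ℕ} {M : ℝ → Matrix (Fin d) (Fin d) ℝ}
    (h : ∀ a b, DifferentiableAt ℝ (fun ε => M ε a b) 0)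
    (hdet : (M 0).det ≠ 0) (a b : Fin d) :
    DifferentiableAt ℝ (fun ε => (M ε)⁻¹ a b) 0 := by
  simp only [Matrix.inv_def, Matrix.smul_apply, smul_eq_mul, Ring.inverse_eq_inv']
  refine DifferentiableAt.mul ((det_diffAt h).inv hdet) ?_
  simp only [Matrix.adjugate_apply]
  refine det_diffAt fun p q => ?_
  simp only [Matrix.updateRow_apply]
  by_cases hp : p = b <;> simp [hp, differentiableAt_const, h]

private lemma hasDerivAt_dot {d : ℕ} {u v : ℝ → Fin d → ℝ} {u' v' : Fin d → ℝ}
    (hu : ∀ m, HasDerivAt (fun ε => u ε m) (u' m) 0)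
    (hv : ∀ m, HasDerivAt (fun ε => v ε m) (v' m) 0) :
    HasDerivAt (fun ε => u ε ⬝ᵥ v ε) (u' ⬝ᵥ v 0 + u 0 ⬝ᵥ v') 0 := by
  simp only [dotProduct, ← Finset.sum_add_distrib]
  exact HasDerivAt.fun_sum fun m _ => (hu m).fun_mul (hv m)

private lemma poly2 (c0 c1 c2 : ℝ) :
    HasDerivAt (fun ε : ℝ => c0 + ε * c1 + ε * ε * c2) c1 0 := by
  have h1 : HasDerivAt (fun ε : ℝ => ε) 1 0 := hasDerivAt_id 0
  have := ((hasDerivAt_const (0:ℝ) c0).fun_add (h1.mul_const c1)).fun_add ((h1.fun_mul h1).mul_const c2)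
  simpa using this

private lemma poly1 (c0 c1 : ℝ) :
    HasDerivAt (fun ε : ℝ => c0 + ε * c1) c1 0 := by
  have h1 : HasDerivAt (fun ε : ℝ => ε) 1 0 := hasDerivAt_id 0
  simpa using (hasDerivAt_const (0:ℝ) c0).fun_add (h1.mul_const c1)

private lemma vecMulVec_mulVec' {n : ℕ} (u v w : Fin n → ℝ) :
    (vecMulVec u v) *ᵥ w = (v ⬝ᵥ w) • u := by
  funext a
  simp [Matrix.mulVec, vecMulVec_apply, dotProduct, Finset.mul_sum, mul_assoc, mul_comm, mul_left_comm]

private lemma mulVec_single' {n d : ℕ} (X : Matrix (Fin n) (Fin d) ℝ) (l : Fin n) :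
    Xᵀ *ᵥ Pi.single l (1:ℝ) = X l := by
  funext m
  simp [Matrix.mulVec, dotProduct, Pi.single_apply]

private lemma single_dot' {n : ℕ} (l : Fin n) (v : Fin n → ℝ) :
    Pi.single l (1:ℝ) ⬝ᵥ v = v l := by
  simp [dotProduct, Pi.single_apply]

private lemma vecMulVec_transpose' {n : ℕ} (u v : Fin n → ℝ) :
    (vecMulVec u v)ᵀ = vecMulVec v u := by
  ext a b; simp [vecMulVec_apply, mul_comm]

/-- Single-edge influence on a single node's output for linear GCN: with
`H := Xᵀ Cᵀ C X` invertible, weighted inner products `⟨a, b⟩_{H⁻¹} := aᵀ H⁻¹ b`,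
`Ξ := e_i e_jᵀ + e_j e_iᵀ`, `w*(ε) := (Xᵀ (C + εΞ)ᵀ (C + εΞ) X)⁻¹ Xᵀ (C + εΞ)ᵀ y`,
`w* := w*(0)`, and `P(ε) := (C + εΞ) X w*(ε)`, for every node `k` the `k`-th coordinate
of the derivative of `P` at `ε = 0` equals
`1{k = i}(x_jᵀ w*) + 1{k = j}(x_iᵀ w*) − ⟨(x_jᵀ w*) z_i + (x_iᵀ w*) z_j, z_k⟩_{H⁻¹}
 + ⟨(y_j − z_jᵀ w*) x_i + (y_i − z_iᵀ w*) x_j, z_k⟩_{H⁻¹}`,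
where `z_l` is the `l`-th row of `Z := C X`. -/
theorem single_edge_influence_on_node_output (n d : ℕ) (C : Matrix (Fin n) (Fin n) ℝ)
    (X : Matrix (Fin n) (Fin d) ℝ) (y : Fin n → ℝ) (i j : Fin n)
    (Ξ : Matrix (Fin n) (Fin n) ℝ)
    (hΞ : Ξ = vecMulVec (Pi.single i (1 : ℝ)) (Pi.single j (1 : ℝ))
            + vecMulVec (Pi.single j (1 : ℝ)) (Pi.single i (1 : ℝ)))
    (hH : Invertible (Xᵀ * Cᵀ * C * X))
    (wstar : Fin d → ℝ)
    (hw : wstar = (Xᵀ * Cᵀ * C * X)⁻¹.mulVec ((Xᵀ * Cᵀ).mulVec y)) :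
    ∀ k : Fin n,
      HasDerivAt
        (fun ε : ℝ =>
          ((C + ε • Ξ) * X).mulVec
            ((Xᵀ * (C + ε • Ξ)ᵀ * (C + ε • Ξ) * X)⁻¹.mulVec
              ((Xᵀ * (C + ε • Ξ)ᵀ).mulVec y)) k)
        ((if k = i then X j ⬝ᵥ wstar else 0) + (if k = j then X i ⬝ᵥ wstar else 0)
          - ((X j ⬝ᵥ wstar) • (C * X) i + (X i ⬝ᵥ wstar) • (C * X) j) ⬝ᵥ
              (Xᵀ * Cᵀ * C * X)⁻¹.mulVec ((C * X) k)
          + ((y j - (C * X) j ⬝ᵥ wstar) • X i + (y i - (C * X) i ⬝ᵥ wstar) • X j) ⬝ᵥ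
              (Xᵀ * Cᵀ * C * X)⁻¹.mulVec ((C * X) k)) 0 := by
  intro k
  set H0 : Matrix (Fin d) (Fin d) ℝ := Xᵀ * Cᵀ * C * X with hH0
  set M1 : Matrix (Fin d) (Fin d) ℝ := Xᵀ * Ξᵀ * C * X + Xᵀ * Cᵀ * Ξ * X with hM1
  set M2 : Matrix (Fin d) (Fin d) ℝ := Xᵀ * Ξᵀ * Ξ * X with hM2
  set b0 : Fin d → ℝ := (Xᵀ * Cᵀ).mulVec y with hb0
  set b1 : Fin d → ℝ := (Xᵀ * Ξᵀ).mulVec y with hb1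
  set H : ℝ → Matrix (Fin d) (Fin d) ℝ := fun ε => Xᵀ * (C + ε • Ξ)ᵀ * (C + ε • Ξ) * X with hHdef
  set bf : ℝ → Fin d → ℝ := fun ε => (Xᵀ * (C + ε • Ξ)ᵀ).mulVec y with hbf
  set w : ℝ → Fin d → ℝ := fun ε => (H ε)⁻¹.mulVec (bf ε) with hwdef
  -- expansion of H
  have hHexp : ∀ ε : ℝ, H ε = H0 + ε • M1 + (ε * ε) • M2 := by
    intro ε
    simp only [hHdef, hH0, hM1, hM2, transpose_add, transpose_smul, Matrix.mul_add,
      Matrix.add_mul, Matrix.smul_mul, Matrix.mul_smul, smul_smul, smul_add, Matrix.mul_assoc]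
    module
  have hbexp : ∀ ε : ℝ, bf ε = b0 + ε • b1 := by
    intro ε
    simp only [hbf, hb0, hb1, transpose_add, transpose_smul, Matrix.mul_add, Matrix.mul_smul,
      Matrix.add_mulVec, Matrix.smul_mulVec]
  have hH00 : H 0 = H0 := by rw [hHexp]; simp
  have hbf0 : bf 0 = b0 := by rw [hbexp]; simp
  have hw0 : w 0 = wstar := by rw [hwdef]; simp only [hH00, hbf0]; rw [hw]
  -- entrywise derivative of H
  have hHd : ∀ a b, HasDerivAt (fun ε => H ε a b) (M1 a b) 0 := by
    intro a b
    have : (fun ε => H ε a b) = fun ε => H0 a b + ε * M1 a b + ε * ε * M2 a b := by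
      funext ε; rw [hHexp]; simp [Matrix.add_apply, Matrix.smul_apply, smul_eq_mul]
    rw [this]; exact poly2 _ _ _
  have hbd : ∀ m, HasDerivAt (fun ε => bf ε m) (b1 m) 0 := by
    intro m
    have : (fun ε => bf ε m) = fun ε => b0 m + ε * b1 m := by
      funext ε; rw [hbexp]; simp
    rw [this]; exact poly1 _ _
  have hHent : ∀ a b, DifferentiableAt ℝ (fun ε => H ε a b) 0 :=
    fun a b => (hHd a b).differentiableAt
  have hdet0 : (H 0).det ≠ 0 := by
    rw [hH00]; exact (Matrix.isUnit_det_of_invertible H0).ne_zero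
  -- differentiability of w
  have hwdiff : ∀ m, DifferentiableAt ℝ (fun ε => w ε m) 0 := by
    intro m
    have : (fun ε => w ε m) = fun ε => ∑ l, (H ε)⁻¹ m l * bf ε l := by
      funext ε; simp [hwdef, Matrix.mulVec, dotProduct]
    rw [this]
    exact DifferentiableAt.fun_sum fun l _ =>
      (inv_entry_diffAt hHent hdet0 m l).fun_mul (hbd l).differentiableAt
  set w' : Fin d → ℝ := fun m => deriv (fun ε => w ε m) 0 with hw'def
  have hw'd : ∀ m, HasDerivAt (fun ε => w ε m) (w' m) 0 := fun m => (hwdiff m).hasDerivAt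
  -- eventual identity
  have hdetev : ∀ᶠ ε in nhds (0:ℝ), (H ε).det ≠ 0 :=
    ((det_diffAt hHent).continuousAt).eventually_ne hdet0
  have hev : ∀ᶠ ε in nhds (0:ℝ), (H ε) *ᵥ (w ε) = bf ε := by
    filter_upwards [hdetev] with ε hε
    rw [hwdef]
    rw [Matrix.mulVec_mulVec, Matrix.mul_nonsing_inv _ (isUnit_iff_ne_zero.2 hε), Matrix.one_mulVec]
  -- derivative equation
  have heqn : ∀ c, M1 c ⬝ᵥ wstar + H0 c ⬝ᵥ w' = b1 c := by
    intro c
    have hL : HasDerivAt (fun ε => ((H ε) *ᵥ (w ε)) c) (M1 c ⬝ᵥ wstar + H0 c ⬝ᵥ w') 0 := by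
      have := hasDerivAt_dot (u := fun ε => H ε c) (v := w) (u' := M1 c) (v' := w')
        (fun m => hHd c m) hw'd
      simpa [hH00, hw0, Matrix.mulVec, dotProduct] using this
    have hR : HasDerivAt (fun ε => ((H ε) *ᵥ (w ε)) c) (b1 c) 0 := by
      refine (hbd c).congr_of_eventuallyEq ?_
      filter_upwards [hev] with ε hε
      rw [hε]
    exact hL.unique hR
  have hHw' : H0 *ᵥ w' = b1 - M1 *ᵥ wstar := by
    funext c
    have := heqn c
    simp only [Matrix.mulVec, Pi.sub_apply]
    rw [show (fun j => H0 c j) ⬝ᵥ w' = H0 c ⬝ᵥ w' from rfl]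
    rw [show (fun j => M1 c j) ⬝ᵥ wstar = M1 c ⬝ᵥ wstar from rfl]
    linarith
  have hw'eq : w' = H0⁻¹ *ᵥ (b1 - M1 *ᵥ wstar) := by
    rw [← hHw', Matrix.mulVec_mulVec, Matrix.nonsing_inv_mul _ (Matrix.isUnit_det_of_invertible H0),
      Matrix.one_mulVec]
  -- the main derivative
  have hmain : HasDerivAt
      (fun ε : ℝ => (((C + ε • Ξ) * X) *ᵥ (w ε)) k)
      ((Ξ * X) k ⬝ᵥ wstar + (C * X) k ⬝ᵥ w') 0 := by
    have hu : ∀ m, HasDerivAt (fun ε : ℝ => ((C + ε • Ξ) * X) k m) ((Ξ * X) k m) 0 := by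
      intro m
      have : (fun ε : ℝ => ((C + ε • Ξ) * X) k m) = fun ε : ℝ => (C * X) k m + ε * (Ξ * X) k m := by
        funext ε
        rw [Matrix.add_mul, Matrix.smul_mul]
        simp [Matrix.add_apply, Matrix.smul_apply, smul_eq_mul]
      rw [this]; exact poly1 _ _
    have := hasDerivAt_dot (u := fun ε => ((C + ε • Ξ) * X) k) (v := w)
      (u' := (Ξ * X) k) (v' := w') hu hw'd
    simpa [hw0, Matrix.mulVec, dotProduct] using this
  -- rewrite the goal's function to match
  have hfun : (fun ε : ℝ =>
          ((C + ε • Ξ) * X).mulVec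
            ((Xᵀ * (C + ε • Ξ)ᵀ * (C + ε • Ξ) * X)⁻¹.mulVec
              ((Xᵀ * (C + ε • Ξ)ᵀ).mulVec y)) k)
      = fun ε : ℝ => (((C + ε • Ξ) * X) *ᵥ (w ε)) k := rfl
  rw [hfun]
  -- now identify the derivative value
  convert hmain using 1
  have hsymH : H0ᵀ = H0 := by
    rw [hH0]; simp only [transpose_mul, transpose_transpose, Matrix.mul_assoc]
  have hsym : (H0⁻¹)ᵀ = H0⁻¹ := by rw [Matrix.transpose_nonsing_inv, hsymH]
  have hswap : ∀ a b : Fin d → ℝ, a ⬝ᵥ (H0⁻¹ *ᵥ b) = b ⬝ᵥ (H0⁻¹ *ᵥ a) := by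
    intro a b
    rw [Matrix.dotProduct_mulVec, ← Matrix.mulVec_transpose, hsym, dotProduct_comm]
  have hΞT : Ξᵀ = vecMulVec (Pi.single j (1:ℝ)) (Pi.single i (1:ℝ))
      + vecMulVec (Pi.single i (1:ℝ)) (Pi.single j (1:ℝ)) := by
    rw [hΞ, transpose_add, vecMulVec_transpose', vecMulVec_transpose']
  have hXiT : ∀ v : Fin n → ℝ, Ξᵀ *ᵥ v = v i • (Pi.single j 1 : Fin n → ℝ) + v j • (Pi.single i 1 : Fin n → ℝ) := by
    intro v
    rw [hΞT, Matrix.add_mulVec, vecMulVec_mulVec', vecMulVec_mulVec', single_dot', single_dot']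
  have hXiv : ∀ v : Fin n → ℝ, Ξ *ᵥ v = v j • (Pi.single i 1 : Fin n → ℝ) + v i • (Pi.single j 1 : Fin n → ℝ) := by
    intro v
    rw [hΞ, Matrix.add_mulVec, vecMulVec_mulVec', vecMulVec_mulVec', single_dot', single_dot']
  have hb1v : b1 = y i • X j + y j • X i := by
    rw [hb1, ← Matrix.mulVec_mulVec, hXiT, Matrix.mulVec_add, Matrix.mulVec_smul,
      Matrix.mulVec_smul, mulVec_single', mulVec_single']
  have hCX : ∀ l, (Xᵀ * Cᵀ) *ᵥ Pi.single l (1:ℝ) = (C * X) l := by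
    intro l; rw [← transpose_mul, mulVec_single']
  have hMv : M1 *ᵥ wstar = (((C * X) i ⬝ᵥ wstar) • X j + ((C * X) j ⬝ᵥ wstar) • X i)
      + ((X j ⬝ᵥ wstar) • (C * X) i + (X i ⬝ᵥ wstar) • (C * X) j) := by
    rw [hM1, Matrix.add_mulVec]
    congr 1
    · rw [show Xᵀ * Ξᵀ * C * X = (Xᵀ * Ξᵀ) * (C * X) by rw [Matrix.mul_assoc, Matrix.mul_assoc],
        ← Matrix.mulVec_mulVec (M := Xᵀ * Ξᵀ) (N := C * X),
        ← Matrix.mulVec_mulVec (M := Xᵀ) (N := Ξᵀ), hXiT, Matrix.mulVec_add,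
        Matrix.mulVec_smul, Matrix.mulVec_smul, mulVec_single', mulVec_single']
      rfl
    · rw [show Xᵀ * Cᵀ * Ξ * X = (Xᵀ * Cᵀ) * Ξ * X from rfl,
        ← Matrix.mulVec_mulVec (M := (Xᵀ * Cᵀ) * Ξ) (N := X),
        ← Matrix.mulVec_mulVec (M := Xᵀ * Cᵀ) (N := Ξ), hXiv, Matrix.mulVec_add,
        Matrix.mulVec_smul, Matrix.mulVec_smul, hCX, hCX]
      rfl
  have hA : (Ξ * X) k ⬝ᵥ wstar
      = (if k = i then X j ⬝ᵥ wstar else 0) + (if k = j then X i ⬝ᵥ wstar else 0) := by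
    have h1 : (Ξ * X) k = ((Ξ * X) *ᵥ wstar) k • (0 : Fin d → ℝ) + (Ξ * X) k := by simp
    have h2 : (Ξ * X) k ⬝ᵥ wstar = ((Ξ * X) *ᵥ wstar) k := rfl
    rw [h2, ← Matrix.mulVec_mulVec, hXiv]
    simp [Pi.single_apply]
    rfl
  rw [hw'eq, hswap ((C * X) k) (b1 - M1 *ᵥ wstar), hA, hb1v, hMv]
  simp only [sub_dotProduct, add_dotProduct, smul_dotProduct, smul_eq_mul]
  ring
end
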